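/- Time-free likelihood identity: for a probability distribution p_0 on X^L with p_0(x_0) > 0 and full support on all marginal conditionals involved, -log p_0(x_0) = ∑_{I ⊊ {1,...,L}} B(L-|I|, |I|+1) · ∑_{i ∉ I} log(1 / p_0(x_0^i | x_0^I)), where x_0^I denotes the subsequence of x_0 indexed by I and p_0(x_0^i | x_0^I) is the conditional probability of token x_0^i at position i given the tokens at positions in I. -/

import Mathlib

open Finset

/-- Marginal probability that the coordinates in `J` take the values specified by `x`,
under a distribution `p0` on `X^L`. -/
noncomputable def marg {X : Type*} [Fintype X] [DecidableEq X] {L : ℕ}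
    (p0 : (Fin L → X) → ℝ) (J : Finset (Fin L)) (x : Fin L → X) : ℝ :=
  ∑ y : Fin L → X, if ∀ i ∈ J, y i = x i then p0 y else 0


lemma key_identity {L : ℕ} (hL : 0 < L) (f : Finset (Fin L) → ℝ) :
    ∑ I ∈ Finset.univ.filter (fun I : Finset (Fin L) => I ≠ Finset.univ),
        ((I.card.factorial : ℝ) * ((L - I.card - 1).factorial : ℝ)) / (L.factorial : ℝ)
          * ∑ i ∈ Iᶜ, (f I - f (insert i I)) = f ∅ - f Finset.univ := by
  classical
  set w : ℕ → ℝ := fun k => ((k.factorial : ℝ) * ((L - k - 1).factorial : ℝ)) / (L.factorial : ℝ)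
    with hw
  set c : ℕ → ℝ := fun k => ((k.factorial : ℝ) * ((L - k).factorial : ℝ)) / (L.factorial : ℝ)
    with hc
  have hLfac : (L.factorial : ℝ) ≠ 0 := Nat.cast_ne_zero.mpr (Nat.factorial_ne_zero _)
  -- rewrite each term
  have step1 : ∀ I ∈ Finset.univ.filter (fun I : Finset (Fin L) => I ≠ Finset.univ),
      w I.card * ∑ i ∈ Iᶜ, (f I - f (insert i I))
        = c I.card * f I - ∑ i ∈ Iᶜ, w I.card * f (insert i I) := by
    intro I hI
    simp only [mem_filter, mem_univ, true_and] at hI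
    have hcard : I.card < L := by
      have := Finset.card_lt_card (lt_of_le_of_ne (Finset.subset_univ I)
        (by simpa using hI))
      simpa using this
    have hcompl : Iᶜ.card = L - I.card := by
      simp [Finset.card_compl]
    rw [Finset.mul_sum]
    simp only [mul_sub]
    rw [Finset.sum_sub_distrib]
    congr 1
    rw [Finset.sum_const, nsmul_eq_mul, hcompl]
    have hpos : 0 < L - I.card := Nat.sub_pos_of_lt hcard
    have : ((L - I.card : ℕ) : ℝ) * w I.card = c I.card := by
      rw [hw, hc]
      have : (L - I.card) * (L - I.card - 1).factorial = (L - I.card).factorial :=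
        Nat.mul_factorial_pred hpos.ne'
      field_simp
      push_cast [← this]
      ring
    rw [← mul_assoc, this]
  rw [Finset.sum_congr rfl step1, Finset.sum_sub_distrib]
  -- reindex the double sum
  have hB : ∑ I ∈ Finset.univ.filter (fun I : Finset (Fin L) => I ≠ Finset.univ),
      ∑ i ∈ Iᶜ, w I.card * f (insert i I)
      = ∑ J ∈ Finset.univ.filter (fun J : Finset (Fin L) => J ≠ ∅), c J.card * f J := by
    rw [Finset.sum_sigma']
    have : ∑ J ∈ Finset.univ.filter (fun J : Finset (Fin L) => J ≠ ∅), c J.card * f J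
        = ∑ J ∈ Finset.univ.filter (fun J : Finset (Fin L) => J ≠ ∅),
            ∑ i ∈ J, w (J.card - 1) * f J := by
      apply Finset.sum_congr rfl
      intro J hJ
      simp only [mem_filter, mem_univ, true_and] at hJ
      have hpos : 0 < J.card := Finset.card_pos.mpr (Finset.nonempty_iff_ne_empty.mpr hJ)
      rw [Finset.sum_const, nsmul_eq_mul, ← mul_assoc]
      congr 1
      simp only [hw, hc]
      have h1 : J.card * (J.card - 1).factorial = J.card.factorial :=
        Nat.mul_factorial_pred hpos.ne'
      have h2 : L - (J.card - 1) - 1 = L - J.card := by omega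
      rw [h2]
      field_simp
      push_cast [← h1]
      ring
    rw [this, Finset.sum_sigma']
    apply Finset.sum_nbij' (fun p => (⟨insert p.2 p.1, p.2⟩ : Σ _ : Finset (Fin L), Fin L))
      (fun p => (⟨p.1.erase p.2, p.2⟩ : Σ _ : Finset (Fin L), Fin L))
    · intro a ha
      simp only [Finset.mem_sigma, mem_filter, mem_univ, true_and, Finset.mem_compl] at ha ⊢
      exact ⟨Finset.insert_ne_empty _ _, Finset.mem_insert_self _ _⟩
    · intro a ha
      simp only [Finset.mem_sigma, mem_filter, mem_univ, true_and, Finset.mem_compl] at ha ⊢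
      constructor
      · intro h
        have : a.2 ∈ a.1.erase a.2 := h ▸ Finset.mem_univ a.2
        exact (Finset.notMem_erase _ _) this
      · exact Finset.notMem_erase _ _
    · intro a ha
      simp only [Finset.mem_sigma, mem_filter, mem_univ, true_and, Finset.mem_compl] at ha
      simp [Finset.erase_insert ha.2]
    · intro a ha
      simp only [Finset.mem_sigma, mem_filter, mem_univ, true_and] at ha
      simp [Finset.insert_erase ha.2]
    · intro a ha
      simp only [Finset.mem_sigma, mem_filter, mem_univ, true_and, Finset.mem_compl] at ha
      rw [Finset.card_insert_of_notMem ha.2]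
      simp
  rw [hB]
  -- telescoping
  have hfilter1 : Finset.univ.filter (fun I : Finset (Fin L) => I ≠ Finset.univ)
      = Finset.univ.erase Finset.univ := by
    ext I; simp [Finset.mem_erase, and_comm]
  have hfilter2 : Finset.univ.filter (fun J : Finset (Fin L) => J ≠ ∅)
      = Finset.univ.erase ∅ := by
    ext J; simp [Finset.mem_erase, and_comm]
  rw [hfilter1, hfilter2,
    Finset.sum_erase_eq_sub (Finset.mem_univ _), Finset.sum_erase_eq_sub (Finset.mem_univ _)]
  have hc0 : c 0 = 1 := by simp [hc, div_self hLfac]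
  have hcL : c L = 1 := by simp [hc, Nat.sub_self, div_self hLfac]
  have hcardu : (Finset.univ : Finset (Fin L)).card = L := by simp
  rw [hcardu]
  simp [hc0, hcL]

/-- Time-free likelihood identity: for a probability distribution `p0` on `X^L` with
`p0 x0 > 0` and positive marginals,
`-log p0(x0) = ∑_{I ⊊ {1,...,L}} B(L-|I|, |I|+1) ∑_{i ∉ I} log (1 / p0(x0^i | x0^I))`,
where `B(a,b) = (a-1)!(b-1)!/(a+b-1)!` and
`p0(x0^i | x0^I) = marg p0 (insert i I) x0 / marg p0 I x0`. -/
theorem time_free_likelihood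
    {X : Type*} [Fintype X] [DecidableEq X] {L : ℕ} (hL : 0 < L)
    (p0 : (Fin L → X) → ℝ) (x0 : Fin L → X)
    (hp0 : ∀ y, 0 ≤ p0 y) (hp1 : ∑ y : Fin L → X, p0 y = 1)
    (hx0 : 0 < p0 x0)
    (hmarg : ∀ J : Finset (Fin L), 0 < marg p0 J x0) :
    -Real.log (p0 x0)
      = ∑ I ∈ Finset.univ.filter (fun I : Finset (Fin L) => I ≠ Finset.univ),
          ((I.card.factorial : ℝ) * ((L - I.card - 1).factorial : ℝ)) / (L.factorial : ℝ)
            * ∑ i ∈ Iᶜ, Real.log (1 / (marg p0 (insert i I) x0 / marg p0 I x0)) := by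
    classical
  set f : Finset (Fin L) → ℝ := fun I => Real.log (marg p0 I x0) with hf
  have hterm : ∀ (I : Finset (Fin L)) (i : Fin L),
      Real.log (1 / (marg p0 (insert i I) x0 / marg p0 I x0)) = f I - f (insert i I) := by
    intro I i
    rw [one_div_div, Real.log_div (hmarg I).ne' (hmarg (insert i I)).ne']
  have hrw : ∀ I : Finset (Fin L),
      ∑ i ∈ Iᶜ, Real.log (1 / (marg p0 (insert i I) x0 / marg p0 I x0))
        = ∑ i ∈ Iᶜ, (f I - f (insert i I)) := fun I =>
    Finset.sum_congr rfl (fun i _ => hterm I i)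
  calc -Real.log (p0 x0) = f ∅ - f Finset.univ := by
        have h1 : marg p0 ∅ x0 = 1 := by simp [marg, hp1]
        have h2 : marg p0 Finset.univ x0 = p0 x0 := by
          rw [marg]
          rw [Finset.sum_eq_single x0]
          · simp
          · intro y _ hy
            rw [if_neg]
            intro h
            exact hy (funext fun i => h i (Finset.mem_univ i))
          · simp
        rw [hf]
        simp [h1, h2]
    _ = _ := by
        rw [← key_identity hL f]
        exact Finset.sum_congr rfl fun I _ => by rw [hrw I]
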